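/- Let (aₙ)ₙ≥₁ be positive reals, (bₙ)ₙ≥₁ reals, n ≥ 1, and let E₀ be a real number with Pₙ(E₀) ≠ 0. With the convention sgn(0) = 1, the number of eigenvalues of Jₙ strictly greater than E₀ equals the number of indices ℓ ∈ {1,…,n} with sgn(P_{ℓ−1}(E₀)) ≠ sgn(P_ℓ(E₀)), and the number of eigenvalues of Jₙ strictly less than E₀ equals the number of indices ℓ ∈ {1,…,n} with sgn(P_{ℓ−1}(E₀)) = sgn(P_ℓ(E₀)). -/

import Mathlib

open Matrix Set
open scoped InnerProductSpace

/-- The n×n Jacobi matrix with diagonal entries b₁,…,bₙ and off-diagonal entries a₁,…,aₙ₋₁. -/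
def jacobiMatrix (a b : ℕ → ℝ) (n : ℕ) : Matrix (Fin n) (Fin n) ℝ :=
  Matrix.of fun i j =>
    if (i : ℕ) = (j : ℕ) then b ((i : ℕ) + 1)
    else if (i : ℕ) + 1 = (j : ℕ) then a ((i : ℕ) + 1)
    else if (j : ℕ) + 1 = (i : ℕ) then a ((j : ℕ) + 1)
    else 0

/-- Shifted orthonormal polynomials: `opoly a b 0 = p₋₁ = 0`, `opoly a b 1 = p₀ = 1`, and
`opoly a b (n+1) = pₙ`, where `aₙ₊₁ pₙ₊₁(E) + (bₙ₊₁ − E) pₙ(E) + aₙ pₙ₋₁(E) = 0`. -/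
noncomputable def opoly (a b : ℕ → ℝ) : ℕ → ℝ → ℝ
  | 0 => fun _ => 0
  | 1 => fun _ => 1
  | n + 2 => fun E => ((E - b (n + 1)) * opoly a b (n + 1) E - a n * opoly a b n E) / a (n + 1)

/-- The monic orthogonal polynomials `Pₙ(E) = (a₁⋯aₙ) pₙ(E)`. -/
noncomputable def monicP (a b : ℕ → ℝ) (n : ℕ) (E : ℝ) : ℝ :=
  (∏ k ∈ Finset.Icc 1 n, a k) * opoly a b (n + 1) E

/-- `E` is an eigenvalue of the real matrix `M`. -/
def IsEigenvalue {n : ℕ} (M : Matrix (Fin n) (Fin n) ℝ) (E : ℝ) : Prop :=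
  ∃ v : Fin n → ℝ, v ≠ 0 ∧ M.mulVec v = E • v

open scoped Classical

/-- The sign function with the convention `sgn(0) = 1`: `sgn(x) = 1` for `x ≥ 0` and
`sgn(x) = −1` for `x < 0`. -/
noncomputable def sgn (x : ℝ) : ℝ := if 0 ≤ x then 1 else -1


namespace Sturm

variable (a b : ℕ → ℝ)


variable (a b : ℕ → ℝ)

lemma monicP_zero (E : ℝ) : monicP a b 0 E = 1 := by
  simp [monicP, opoly]

lemma monicP_one (ha : a 1 ≠ 0) (E : ℝ) : monicP a b 1 E = E - b 1 := by
  simp only [monicP, opoly, Finset.Icc_self, Finset.prod_singleton]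
  field_simp
  ring

lemma monicP_succ_succ (k : ℕ) (h1 : a (k+1) ≠ 0) (h2 : a (k+2) ≠ 0) (E : ℝ) :
    monicP a b (k+2) E
      = (E - b (k+2)) * monicP a b (k+1) E - (a (k+1))^2 * monicP a b k E := by
  have e1 : ∏ x ∈ Finset.Icc 1 (k+2), a x = (∏ x ∈ Finset.Icc 1 (k+1), a x) * a (k+2) :=
    Finset.prod_Icc_succ_top (by omega) a
  have e2 : ∏ x ∈ Finset.Icc 1 (k+1), a x = (∏ x ∈ Finset.Icc 1 k, a x) * a (k+1) :=
    Finset.prod_Icc_succ_top (by omega) a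
  show (∏ x ∈ Finset.Icc 1 (k+2), a x) * opoly a b (k+3) E = _
  have : opoly a b (k+3) E
      = ((E - b (k+2)) * opoly a b (k+2) E - a (k+1) * opoly a b (k+1) E) / a (k+2) := rfl
  rw [this, e1, e2, monicP, monicP, e2]
  generalize (∏ x ∈ Finset.Icc 1 k, a x) = c
  field_simp


lemma jacobi_isHermitian (m : ℕ) : (jacobiMatrix a b m).IsHermitian := by
  ext i j
  simp only [conjTranspose_apply, jacobiMatrix, of_apply, star_trivial]
  split_ifs <;> first | rfl | omega | (congr 1; omega)

variable (a b : ℕ → ℝ)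

noncomputable def shiftM (E : ℝ) (m : ℕ) : Matrix (Fin m) (Fin m) ℝ :=
  E • 1 - jacobiMatrix a b m

lemma shift_apply (E : ℝ) (m : ℕ) (i j : Fin m) :
    shiftM a b E m i j
      = if (i:ℕ) = (j:ℕ) then E - b ((i:ℕ)+1)
        else if (i:ℕ)+1 = (j:ℕ) then -a ((i:ℕ)+1)
        else if (j:ℕ)+1 = (i:ℕ) then -a ((j:ℕ)+1) else 0 := by
  have hij : (i = j) ↔ ((i:ℕ) = (j:ℕ)) := Fin.ext_iff
  simp only [shiftM, Matrix.sub_apply, Matrix.smul_apply, Matrix.one_apply, jacobiMatrix, of_apply,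
    smul_eq_mul]
  split_ifs <;> simp_all

lemma shift_entry_congr (E : ℝ) {m m' : ℕ} (i j : Fin m) (i' j' : Fin m')
    (hi : (i:ℕ) = (i':ℕ)) (hj : (j:ℕ) = (j':ℕ)) :
    shiftM a b E m i j = shiftM a b E m' i' j' := by
  rw [shift_apply, shift_apply, hi, hj]

lemma coe_succAbove {n : ℕ} (p : Fin (n+1)) (i : Fin n) :
    ((p.succAbove i : Fin (n+1)) : ℕ) = if (i:ℕ) < (p:ℕ) then (i:ℕ) else (i:ℕ)+1 := by
  by_cases h : Fin.castSucc i < p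
  · rw [Fin.succAbove_of_castSucc_lt _ _ h, Fin.coe_castSucc, if_pos]
    simpa [Fin.lt_def] using h
  · rw [Fin.succAbove_of_le_castSucc _ _ (not_lt.1 h), Fin.val_succ, if_neg]
    simp only [Fin.lt_def, Fin.coe_castSucc, not_lt] at h ⊢
    omega

lemma det_shift_zero (E : ℝ) : (shiftM a b E 0).det = 1 := Matrix.det_fin_zero

lemma det_shift_one (E : ℝ) : (shiftM a b E 1).det = E - b 1 := by
  rw [Matrix.det_fin_one, shift_apply]; norm_num

lemma det_shift_rec (E : ℝ) (k : ℕ) :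
    (shiftM a b E (k+2)).det
      = (E - b (k+2)) * (shiftM a b E (k+1)).det - (a (k+1))^2 * (shiftM a b E k).det := by
  set M : Matrix (Fin (k+1+1)) (Fin (k+1+1)) ℝ := shiftM a b E (k+2) with hM
  have hsub1 : M.submatrix (Fin.last (k+1)).succAbove (Fin.last (k+1)).succAbove
      = shiftM a b E (k+1) := by
    ext i j
    rw [Matrix.submatrix_apply]
    have hi := i.isLt; have hj := j.isLt
    apply shift_entry_congr <;>
      · simp only [coe_succAbove, Fin.coe_castSucc, Fin.val_last]
        split_ifs <;> omega
  set N : Matrix (Fin (k+1)) (Fin (k+1)) ℝ :=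
    M.submatrix (Fin.last (k+1)).succAbove ((Fin.castSucc (Fin.last k)).succAbove) with hN
  have hsub2 : N.submatrix (Fin.last k).succAbove (Fin.last k).succAbove
      = shiftM a b E k := by
    ext i j
    simp only [hN, Matrix.submatrix_apply]
    have hi := i.isLt; have hj := j.isLt
    apply shift_entry_congr <;>
      · simp only [coe_succAbove, Fin.coe_castSucc, Fin.val_last]
        split_ifs <;> omega
  -- value of N at (castSucc i, last) is 0, at (last, last) is -a(k+1)
  have hNcol0 : ∀ i : Fin k, N (Fin.castSucc i) (Fin.last k) = 0 := by
    intro i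
    have hi := i.isLt
    have step : N (Fin.castSucc i) (Fin.last k)
        = shiftM a b E (k+2) ⟨(i:ℕ), by omega⟩ ⟨k+1, by omega⟩ := by
      simp only [hN, hM, Matrix.submatrix_apply]
      apply shift_entry_congr <;>
        · simp only [coe_succAbove, Fin.coe_castSucc, Fin.val_last]
          split_ifs <;> omega
    rw [step, shift_apply]
    simp only []
    split_ifs <;> first | omega | rfl
  have hNll : N (Fin.last k) (Fin.last k) = -a (k+1) := by
    have step : N (Fin.last k) (Fin.last k)
        = shiftM a b E (k+2) ⟨k, by omega⟩ ⟨k+1, by omega⟩ := by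
      simp only [hN, hM, Matrix.submatrix_apply]
      apply shift_entry_congr <;>
        · simp only [coe_succAbove, Fin.coe_castSucc, Fin.val_last]
          split_ifs <;> omega
    rw [step, shift_apply]
    norm_num
  have hdetN : N.det = -a (k+1) * (shiftM a b E k).det := by
    rw [Matrix.det_succ_column N (Fin.last k), Fin.sum_univ_castSucc]
    have h0 : (∑ i : Fin k, (-1:ℝ)^(((Fin.castSucc i : Fin (k+1)):ℕ) + ((Fin.last k):ℕ)) *
        N (Fin.castSucc i) (Fin.last k) *
        (N.submatrix (Fin.castSucc i).succAbove (Fin.last k).succAbove).det) = 0 := by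
      apply Finset.sum_eq_zero
      intro i _
      rw [hNcol0 i]; ring
    rw [h0, zero_add, hNll, hsub2]
    simp only [Fin.val_last]
    rw [show (-1:ℝ)^(k + k) = 1 from Even.neg_one_pow ⟨k, rfl⟩]
    ring
  -- main expansion along last row
  rw [show (shiftM a b E (k+2)).det = M.det from rfl]
  rw [Matrix.det_succ_row M (Fin.last (k+1)), Fin.sum_univ_castSucc, Fin.sum_univ_castSucc]
  have h0 : (∑ j : Fin k, (-1:ℝ)^(((Fin.last (k+1)):ℕ) +
      ((Fin.castSucc (Fin.castSucc j) : Fin (k+2)):ℕ)) *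
      M (Fin.last (k+1)) (Fin.castSucc (Fin.castSucc j)) *
      (M.submatrix (Fin.last (k+1)).succAbove
        (Fin.castSucc (Fin.castSucc j)).succAbove).det) = 0 := by
    apply Finset.sum_eq_zero
    intro j _
    have hentry : M (Fin.last (k+1)) (Fin.castSucc (Fin.castSucc j)) = 0 := by
      rw [hM, shift_apply]
      have := j.isLt
      simp only [Fin.val_last, Fin.coe_castSucc]
      split_ifs <;> first | omega | rfl
    rw [hentry]; ring
  have hlastlast : M (Fin.last (k+1)) (Fin.last (k+1)) = E - b (k+2) := by
    rw [hM, shift_apply, Fin.val_last, if_pos rfl]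
  have hlastpen : M (Fin.last (k+1)) (Fin.castSucc (Fin.last k)) = -a (k+1) := by
    rw [hM, shift_apply, Fin.val_last, Fin.coe_castSucc, Fin.val_last]
    rw [if_neg (by omega), if_neg (by omega), if_pos (by omega)]
  rw [h0, zero_add, hlastlast, hlastpen, hsub1]
  simp only [Fin.coe_castSucc, Fin.val_last]
  have e1 : (-1:ℝ)^((k+1) + (k+1)) = 1 := Even.neg_one_pow ⟨k+1, by ring⟩
  have e2 : (-1:ℝ)^((k+1) + k) = -1 := Odd.neg_one_pow ⟨k, by ring⟩
  rw [e1, e2, hdetN]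
  ring


variable (a b : ℕ → ℝ)

lemma det_eq_monicP (ha : ∀ k, 1 ≤ k → a k ≠ 0) (E : ℝ) :
    ∀ m, (shiftM a b E m).det = monicP a b m E := by
  intro m
  induction m using Nat.strong_induction_on with
  | _ m ih =>
    match m with
    | 0 => rw [det_shift_zero, monicP_zero]
    | 1 => rw [det_shift_one, monicP_one a b (ha 1 le_rfl)]
    | (k+2) =>
      rw [det_shift_rec, ih (k+1) (by omega), ih k (by omega),
        monicP_succ_succ a b k (ha (k+1) (by omega)) (ha (k+2) (by omega))]

lemma isEigenvalue_iff_det (m : ℕ) (E : ℝ) :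
    IsEigenvalue (jacobiMatrix a b m) E ↔ (shiftM a b E m).det = 0 := by
  rw [← Matrix.exists_mulVec_eq_zero_iff (M := shiftM a b E m)]
  unfold IsEigenvalue
  constructor
  · rintro ⟨v, hv, hJv⟩
    refine ⟨v, hv, ?_⟩
    rw [shiftM, Matrix.sub_mulVec, Matrix.smul_mulVec, Matrix.one_mulVec, hJv, sub_self]
  · rintro ⟨v, hv, hNv⟩
    refine ⟨v, hv, ?_⟩
    rw [shiftM, Matrix.sub_mulVec, Matrix.smul_mulVec, Matrix.one_mulVec, sub_eq_zero] at hNv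
    exact hNv.symm

lemma isEigenvalue_iff_monicP (ha : ∀ k, 1 ≤ k → a k ≠ 0) (m : ℕ) (E : ℝ) :
    IsEigenvalue (jacobiMatrix a b m) E ↔ monicP a b m E = 0 := by
  rw [isEigenvalue_iff_det, det_eq_monicP a b ha]

lemma smul_one_sub_diagonal (E : ℝ) (m : ℕ) (d : Fin m → ℝ) :
    E • (1 : Matrix (Fin m) (Fin m) ℝ) - diagonal d = diagonal (fun i => E - d i) := by
  ext i j
  simp only [Matrix.sub_apply, Matrix.smul_apply, Matrix.one_apply, Matrix.diagonal_apply,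
    smul_eq_mul]
  split_ifs <;> simp

lemma det_shift_eq_prod (m : ℕ) (E : ℝ) :
    (shiftM a b E m).det = ∏ i, (E - (jacobi_isHermitian a b m).eigenvalues i) := by
  set hH := jacobi_isHermitian a b m
  set U : Matrix (Fin m) (Fin m) ℝ := (hH.eigenvectorUnitary : Matrix (Fin m) (Fin m) ℝ) with hU
  have hdiag : (RCLike.ofReal ∘ hH.eigenvalues : Fin m → ℝ) = hH.eigenvalues := by
    funext i; simp [RCLike.ofReal]
  have hspec : jacobiMatrix a b m = U * diagonal hH.eigenvalues * star U := by
    have := hH.spectral_theorem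
    rwa [hdiag] at this
  have hUU : U * star U = 1 := Matrix.mem_unitaryGroup_iff.mp hH.eigenvectorUnitary.2
  have key : U * (diagonal (fun i => E - hH.eigenvalues i)) * star U
      = E • 1 - jacobiMatrix a b m := by
    rw [← smul_one_sub_diagonal E m hH.eigenvalues, Matrix.mul_sub, Matrix.sub_mul,
      Matrix.mul_smul, Matrix.mul_one, Matrix.smul_mul, hUU, ← hspec]
  rw [shiftM, ← key, Matrix.det_mul, Matrix.det_mul, mul_right_comm, ← Matrix.det_mul, hUU,
    Matrix.det_one, one_mul, Matrix.det_diagonal]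


lemma monicP_eq_prod (ha : ∀ k, 1 ≤ k → a k ≠ 0) (m : ℕ) (E : ℝ) :
    monicP a b m E = ∏ i, (E - (jacobi_isHermitian a b m).eigenvalues i) := by
  rw [← det_eq_monicP a b ha E m]
  exact det_shift_eq_prod a b m E

variable (a b : ℕ → ℝ)

/-- An eigenvector of a Jacobi matrix vanishing at the first coordinate is zero. -/
lemma eigvec_zero_of_first (hpos : ∀ k, 1 ≤ k → 0 < a k) (E : ℝ) (t : ℕ)
    (v : Fin (t+1) → ℝ) (hv : jacobiMatrix a b (t+1) *ᵥ v = E • v) (h0 : v 0 = 0) :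
    v = 0 := by
  have hNv : shiftM a b E (t+1) *ᵥ v = 0 := by
    rw [shiftM, Matrix.sub_mulVec, Matrix.smul_mulVec, Matrix.one_mulVec, hv, sub_self]
  set B : Matrix (Fin t) (Fin t) ℝ :=
    Matrix.of (fun i j => shiftM a b E (t+1) (Fin.castSucc i) (Fin.succ j)) with hB
  have hBw : B *ᵥ (v ∘ Fin.succ) = 0 := by
    funext i
    have hrow : (shiftM a b E (t+1) *ᵥ v) (Fin.castSucc i) = 0 := by rw [hNv]; rfl
    rw [Matrix.mulVec, dotProduct] at hrow ⊢
    rw [Fin.sum_univ_succ] at hrow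
    have hfirst : shiftM a b E (t+1) (Fin.castSucc i) 0 * v 0 = 0 := by rw [h0, mul_zero]
    rw [hfirst, zero_add] at hrow
    simpa [hB] using hrow
  have hBtri : B.BlockTriangular OrderDual.toDual := by
    intro i j hij
    have hij' : (i:ℕ) < (j:ℕ) := hij
    rw [hB, Matrix.of_apply, shift_apply]
    simp only [Fin.coe_castSucc, Fin.val_succ]
    split_ifs <;> first | omega | rfl
  have hdetB : B.det = ∏ i : Fin t, (-a ((i:ℕ)+1)) := by
    rw [Matrix.det_of_lowerTriangular B hBtri]
    apply Finset.prod_congr rfl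
    intro i _
    rw [hB, Matrix.of_apply, shift_apply]
    simp only [Fin.coe_castSucc, Fin.val_succ]
    split_ifs <;> first | omega | rfl
  have hdetB_ne : B.det ≠ 0 := by
    rw [hdetB]
    apply Finset.prod_ne_zero_iff.2
    intro i _
    have := hpos ((i:ℕ)+1) (by omega)
    intro h; rw [neg_eq_zero] at h; linarith
  have hw : v ∘ Fin.succ = 0 := by
    by_contra hne
    exact hdetB_ne ((Matrix.exists_mulVec_eq_zero_iff).1 ⟨v ∘ Fin.succ, hne, hBw⟩)
  funext i
  refine Fin.cases ?_ ?_ i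
  · exact h0
  · intro j
    have := congrFun hw j
    simpa using this

/-- Eigenvalues of the Jacobi matrix are simple: the eigenvalue function is injective. -/
lemma ev_injective (hpos : ∀ k, 1 ≤ k → 0 < a k) (m : ℕ) :
    Function.Injective (jacobi_isHermitian a b m).eigenvalues := by
  intro i j hij
  by_contra hne
  rcases m with _ | t
  · exact i.elim0
  set hH := jacobi_isHermitian a b (t+1)
  set u : EuclideanSpace ℝ (Fin (t+1)) := hH.eigenvectorBasis i with hu
  set w : EuclideanSpace ℝ (Fin (t+1)) := hH.eigenvectorBasis j with hw
  have hJu : jacobiMatrix a b (t+1) *ᵥ ⇑u = hH.eigenvalues i • ⇑u := hH.mulVec_eigenvectorBasis i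
  have hJw : jacobiMatrix a b (t+1) *ᵥ ⇑w = hH.eigenvalues j • ⇑w := hH.mulVec_eigenvectorBasis j
  have horth := hH.eigenvectorBasis.orthonormal
  have huu : ⟪u, u⟫_ℝ = 1 := by
    have := orthonormal_iff_ite.mp horth i i; rwa [if_pos rfl] at this
  have hwu : ⟪w, u⟫_ℝ = 0 := by
    have := orthonormal_iff_ite.mp horth j i; rwa [if_neg (Ne.symm hne)] at this
  have hww : ⟪w, w⟫_ℝ = 1 := by
    have := orthonormal_iff_ite.mp horth j j; rwa [if_pos rfl] at this
  -- first coordinates are nonzero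
  have hu0 : (⇑u : Fin (t+1) → ℝ) 0 ≠ 0 := by
    intro h
    have : (⇑u : Fin (t+1) → ℝ) = 0 := eigvec_zero_of_first a b hpos _ t _ hJu h
    have : u = 0 := by ext k; exact congrFun this k
    rw [this] at huu; simp at huu
  have hw0 : (⇑w : Fin (t+1) → ℝ) 0 ≠ 0 := by
    intro h
    have : (⇑w : Fin (t+1) → ℝ) = 0 := eigvec_zero_of_first a b hpos _ t _ hJw h
    have : w = 0 := by ext k; exact congrFun this k
    rw [this] at hww; simp at hww
  set z : EuclideanSpace ℝ (Fin (t+1)) := (⇑u 0 : ℝ) • w - (⇑w 0 : ℝ) • u with hz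
  have hJz : jacobiMatrix a b (t+1) *ᵥ ⇑z = hH.eigenvalues i • ⇑z := by
    have hcoez : (⇑z : Fin (t+1) → ℝ) = (⇑u 0 : ℝ) • ⇑w - (⇑w 0 : ℝ) • ⇑u := rfl
    rw [hcoez, Matrix.mulVec_sub, Matrix.mulVec_smul, Matrix.mulVec_smul, hJu, hJw, hij]
    module
  have hz0 : (⇑z : Fin (t+1) → ℝ) 0 = 0 := by
    simp only [hz]
    show (⇑u 0 : ℝ) * (⇑w 0) - (⇑w 0 : ℝ) * (⇑u 0) = 0
    ring
  have hzero : (⇑z : Fin (t+1) → ℝ) = 0 := eigvec_zero_of_first a b hpos _ t _ hJz hz0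
  have hz' : z = 0 := by ext k; exact congrFun hzero k
  have : ⟪w, z⟫_ℝ = (⇑u 0 : ℝ) := by
    rw [hz, inner_sub_right, real_inner_smul_right, real_inner_smul_right, hww, hwu]
    ring
  rw [hz', inner_zero_right] at this
  exact hu0 this.symm


end Sturm

namespace Sturm


variable {m : ℕ}

open scoped Classical

noncomputable def coords (A : Matrix (Fin m) (Fin m) ℝ) (hA : A.IsHermitian)
    (v : Fin m → ℝ) : Fin m → ℝ :=
  star (hA.eigenvectorUnitary : Matrix (Fin m) (Fin m) ℝ) *ᵥ v

lemma coords_recover (A : Matrix (Fin m) (Fin m) ℝ) (hA : A.IsHermitian) (v : Fin m → ℝ) :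
    (hA.eigenvectorUnitary : Matrix (Fin m) (Fin m) ℝ) *ᵥ coords A hA v = v := by
  rw [coords, Matrix.mulVec_mulVec, Matrix.mem_unitaryGroup_iff.mp hA.eigenvectorUnitary.2,
    Matrix.one_mulVec]

lemma coords_mulVec (A : Matrix (Fin m) (Fin m) ℝ) (hA : A.IsHermitian) (w : Fin m → ℝ) :
    coords A hA ((hA.eigenvectorUnitary : Matrix (Fin m) (Fin m) ℝ) *ᵥ w) = w := by
  rw [coords, Matrix.mulVec_mulVec, Matrix.mem_unitaryGroup_iff'.mp hA.eigenvectorUnitary.2,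
    Matrix.one_mulVec]

lemma coords_eq_zero_iff (A : Matrix (Fin m) (Fin m) ℝ) (hA : A.IsHermitian) (v : Fin m → ℝ) :
    coords A hA v = 0 ↔ v = 0 := by
  constructor
  · intro h
    have := coords_recover A hA v
    rw [h, Matrix.mulVec_zero] at this
    exact this.symm
  · intro h; rw [h, coords, Matrix.mulVec_zero]

lemma dotProduct_mulVec_star (M : Matrix (Fin m) (Fin m) ℝ) (v w : Fin m → ℝ) :
    v ⬝ᵥ (M *ᵥ w) = (star M *ᵥ v) ⬝ᵥ w := by
  rw [Matrix.dotProduct_mulVec]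
  congr 1
  funext j
  simp [Matrix.vecMul, Matrix.mulVec, dotProduct, Matrix.star_apply, mul_comm]

lemma dot_self_coords (A : Matrix (Fin m) (Fin m) ℝ) (hA : A.IsHermitian) (v : Fin m → ℝ) :
    v ⬝ᵥ v = ∑ i, (coords A hA v i)^2 := by
  set U : Matrix (Fin m) (Fin m) ℝ := (hA.eigenvectorUnitary : Matrix (Fin m) (Fin m) ℝ)
  set w := coords A hA v with hw
  conv_lhs => rw [← coords_recover A hA v]
  rw [dotProduct_mulVec_star, Matrix.mulVec_mulVec,
    Matrix.mem_unitaryGroup_iff'.mp hA.eigenvectorUnitary.2, Matrix.one_mulVec]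
  simp [dotProduct, sq, hw]

lemma quad_decomp (A : Matrix (Fin m) (Fin m) ℝ) (hA : A.IsHermitian) (E₀ : ℝ)
    (v : Fin m → ℝ) :
    v ⬝ᵥ (A *ᵥ v) - E₀ * (v ⬝ᵥ v)
      = ∑ i, (hA.eigenvalues i - E₀) * (coords A hA v i)^2 := by
  set U : Matrix (Fin m) (Fin m) ℝ := (hA.eigenvectorUnitary : Matrix (Fin m) (Fin m) ℝ) with hU
  set w := coords A hA v with hw
  have hdiag : (RCLike.ofReal ∘ hA.eigenvalues : Fin m → ℝ) = hA.eigenvalues := by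
    funext i; simp [RCLike.ofReal]
  have hspec : A = U * diagonal hA.eigenvalues * star U := by
    have := hA.spectral_theorem; rwa [hdiag] at this
  have h1 : v ⬝ᵥ (A *ᵥ v) = ∑ i, hA.eigenvalues i * (w i)^2 := by
    conv_lhs => rw [hspec, ← Matrix.mulVec_mulVec, ← Matrix.mulVec_mulVec,
      dotProduct_mulVec_star]
    rw [← coords] at *
    rw [← hw]
    simp [dotProduct, Matrix.mulVec_diagonal]
    apply Finset.sum_congr rfl
    intro i _
    ring
  rw [h1, dot_self_coords A hA v, Finset.mul_sum, ← Finset.sum_sub_distrib]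
  apply Finset.sum_congr rfl
  intro i _
  ring

/-- Upper bound: any subspace on which the quadratic form is `> E₀`-definite has
dimension at most the number of eigenvalues exceeding `E₀`. -/
lemma posdim_le (A : Matrix (Fin m) (Fin m) ℝ) (hA : A.IsHermitian) (E₀ : ℝ)
    (S : Submodule ℝ (Fin m → ℝ))
    (hS : ∀ v ∈ S, v ≠ 0 → E₀ * (v ⬝ᵥ v) < v ⬝ᵥ (A *ᵥ v)) :
    Module.finrank ℝ S ≤ (Finset.univ.filter (fun i => E₀ < hA.eigenvalues i)).card := by
  classical
  set pos := Finset.univ.filter (fun i => E₀ < hA.eigenvalues i) with hpos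
  set φ : S →ₗ[ℝ] (pos → ℝ) :=
    (LinearMap.pi (fun i : pos => LinearMap.proj (i : Fin m))) ∘ₗ
      (Matrix.mulVecLin (star (hA.eigenvectorUnitary : Matrix (Fin m) (Fin m) ℝ))) ∘ₗ S.subtype
    with hφ
  have hinj : Function.Injective φ := by
    rw [← LinearMap.ker_eq_bot]
    rw [Submodule.eq_bot_iff]
    rintro ⟨v, hv⟩ hker
    have hcoords : ∀ i : pos, coords A hA v (i : Fin m) = 0 := by
      intro i
      have h0 : φ ⟨v, hv⟩ = 0 := LinearMap.mem_ker.mp hker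
      have := congrFun h0 i
      simpa [hφ, coords, Matrix.mulVecLin_apply] using this
    have hle : v ⬝ᵥ (A *ᵥ v) - E₀ * (v ⬝ᵥ v) ≤ 0 := by
      rw [quad_decomp A hA E₀ v]
      apply Finset.sum_nonpos
      intro i _
      by_cases hi : E₀ < hA.eigenvalues i
      · have : coords A hA v i = 0 := hcoords ⟨i, by simp [hpos, hi]⟩
        rw [this]; simp
      · have h1 : hA.eigenvalues i - E₀ ≤ 0 := by linarith [not_lt.mp hi]
        have h2 : (0:ℝ) ≤ (coords A hA v i)^2 := sq_nonneg _
        exact mul_nonpos_of_nonpos_of_nonneg h1 h2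
    by_contra hne
    have hvne : v ≠ 0 := by
      intro h; apply hne; ext; simp [h]
    have := hS v hv hvne
    simp only [Submodule.mk_eq_zero] at hne
    linarith
  calc Module.finrank ℝ S ≤ Module.finrank ℝ (pos → ℝ) :=
        LinearMap.finrank_le_finrank_of_injective hinj
    _ = pos.card := by rw [Module.finrank_fintype_fun_eq_card, Fintype.card_coe]

/-- Lower bound: there exists a subspace of dimension the number of eigenvalues
exceeding `E₀` on which the form is `> E₀`-definite. -/
lemma exists_posdim (A : Matrix (Fin m) (Fin m) ℝ) (hA : A.IsHermitian) (E₀ : ℝ) :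
    ∃ S : Submodule ℝ (Fin m → ℝ),
      (∀ v ∈ S, v ≠ 0 → E₀ * (v ⬝ᵥ v) < v ⬝ᵥ (A *ᵥ v)) ∧
      Module.finrank ℝ S = (Finset.univ.filter (fun i => E₀ < hA.eigenvalues i)).card := by
  classical
  set pos := Finset.univ.filter (fun i => E₀ < hA.eigenvalues i) with hpos
  set U : Matrix (Fin m) (Fin m) ℝ := (hA.eigenvectorUnitary : Matrix (Fin m) (Fin m) ℝ) with hU
  set ψ : (pos → ℝ) →ₗ[ℝ] (Fin m → ℝ) :=
    { toFun := fun x => fun i => if h : i ∈ pos then x ⟨i, h⟩ else 0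
      map_add' := by
        intro x y; funext i; by_cases h : i ∈ pos <;> simp [h]
      map_smul' := by
        intro c x; funext i; by_cases h : i ∈ pos <;> simp [h] } with hψ
  have hψ_apply : ∀ (x : pos → ℝ) (i : Fin m), ψ x i = if h : i ∈ pos then x ⟨i, h⟩ else 0 :=
    fun x i => rfl
  set f : (pos → ℝ) →ₗ[ℝ] (Fin m → ℝ) := (Matrix.mulVecLin U) ∘ₗ ψ with hf
  refine ⟨LinearMap.range f, ?_, ?_⟩
  · rintro v ⟨x, rfl⟩ hvne
    have hfx : f x = U *ᵥ ψ x := rfl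
    have hcoords : coords A hA (f x) = ψ x := by
      rw [hfx]; exact coords_mulVec A hA (ψ x)
    have hsupp : ∀ i : Fin m, coords A hA (f x) i ≠ 0 → E₀ < hA.eigenvalues i := by
      intro i hne
      rw [hcoords, hψ_apply] at hne
      by_cases h : i ∈ pos
      · exact (Finset.mem_filter.mp h).2
      · simp [h] at hne
    have hwne : coords A hA (f x) ≠ 0 := by
      intro h; exact hvne ((coords_eq_zero_iff A hA (f x)).mp h)
    have : 0 < (f x) ⬝ᵥ (A *ᵥ (f x)) - E₀ * ((f x) ⬝ᵥ (f x)) := by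
      rw [quad_decomp A hA E₀ (f x)]
      obtain ⟨i0, hi0⟩ : ∃ i, coords A hA (f x) i ≠ 0 := by
        by_contra h
        push_neg at h
        exact hwne (funext h)
      apply Finset.sum_pos'
      · intro i _
        by_cases h : coords A hA (f x) i = 0
        · rw [h]; simp
        · have := hsupp i h
          exact mul_nonneg (by linarith) (sq_nonneg _)
      · refine ⟨i0, Finset.mem_univ _, ?_⟩
        have := hsupp i0 hi0
        have h2 : 0 < (coords A hA (f x) i0)^2 := by positivity
        exact mul_pos (by linarith) h2
    linarith
  · have hinj : Function.Injective f := by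
      rw [← LinearMap.ker_eq_bot, Submodule.eq_bot_iff]
      intro x hx
      have h0 : U *ᵥ ψ x = 0 := LinearMap.mem_ker.mp hx
      have : ψ x = 0 := by
        have := congrArg (fun y => star U *ᵥ y) h0
        simpa [Matrix.mulVec_mulVec,
          (Matrix.mem_unitaryGroup_iff'.mp hA.eigenvectorUnitary.2 : star U * U = 1),
          Matrix.one_mulVec, Matrix.mulVec_zero] using this
      funext i
      have := congrFun this (i : Fin m)
      rw [hψ_apply] at this
      simpa [i.2] using this
    rw [LinearMap.finrank_range_of_inj hinj, Module.finrank_fintype_fun_eq_card,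
      Fintype.card_coe]


variable (a b : ℕ → ℝ) (E₀ : ℝ)

open scoped Classical

variable (a b : ℕ → ℝ) (E₀ : ℝ)

/-- Number of eigenvalues of `Jₘ` exceeding `E₀`. -/
noncomputable def cnt (m : ℕ) : ℕ :=
  (Finset.univ.filter (fun i => E₀ < (jacobi_isHermitian a b m).eigenvalues i)).card

/-- Extension by zero. -/
noncomputable def ext0 (m : ℕ) : (Fin m → ℝ) →ₗ[ℝ] (Fin (m+1) → ℝ) where
  toFun := fun v => fun j => if h : (j:ℕ) < m then v ⟨j, h⟩ else 0
  map_add' := by intro x y; funext j; by_cases h : (j:ℕ) < m <;> simp [h]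
  map_smul' := by intro c x; funext j; by_cases h : (j:ℕ) < m <;> simp [h]

lemma ext0_castSucc (m : ℕ) (v : Fin m → ℝ) (i : Fin m) :
    ext0 m v (Fin.castSucc i) = v i := by
  show (if h : ((Fin.castSucc i : Fin (m+1)):ℕ) < m then v ⟨_, h⟩ else 0) = v i
  rw [dif_pos (by simp [Fin.coe_castSucc, i.isLt])]
  exact congrArg v (Fin.ext (by simp))

lemma ext0_last (m : ℕ) (v : Fin m → ℝ) : ext0 m v (Fin.last m) = 0 := by
  show (if h : ((Fin.last m : Fin (m+1)):ℕ) < m then v ⟨_, h⟩ else 0) = 0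
  rw [dif_neg (by simp)]

lemma jacobi_entry_castSucc (m : ℕ) (i j : Fin m) :
    jacobiMatrix a b (m+1) (Fin.castSucc i) (Fin.castSucc j) = jacobiMatrix a b m i j := by
  simp [jacobiMatrix, Fin.coe_castSucc]

lemma ext0_dot (m : ℕ) (v : Fin m → ℝ) : (ext0 m v) ⬝ᵥ (ext0 m v) = v ⬝ᵥ v := by
  rw [dotProduct, dotProduct, Fin.sum_univ_castSucc, ext0_last]
  simp only [ext0_castSucc, mul_zero, add_zero]

lemma ext0_mulVec_castSucc (m : ℕ) (v : Fin m → ℝ) (i : Fin m) :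
    (jacobiMatrix a b (m+1) *ᵥ (ext0 m v)) (Fin.castSucc i)
      = (jacobiMatrix a b m *ᵥ v) i := by
  rw [Matrix.mulVec, Matrix.mulVec, dotProduct, dotProduct,
    Fin.sum_univ_castSucc, ext0_last, mul_zero, add_zero]
  apply Finset.sum_congr rfl
  intro j _
  rw [ext0_castSucc, jacobi_entry_castSucc]

lemma ext0_quad (m : ℕ) (v : Fin m → ℝ) :
    (ext0 m v) ⬝ᵥ (jacobiMatrix a b (m+1) *ᵥ (ext0 m v))
      = v ⬝ᵥ (jacobiMatrix a b m *ᵥ v) := by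
  rw [dotProduct, dotProduct, Fin.sum_univ_castSucc, ext0_last, zero_mul, add_zero]
  apply Finset.sum_congr rfl
  intro i _
  rw [ext0_castSucc, ext0_mulVec_castSucc]

lemma ext0_injective (m : ℕ) : Function.Injective (ext0 m) := by
  intro x y h
  funext i
  have := congrFun h (Fin.castSucc i)
  rwa [ext0_castSucc, ext0_castSucc] at this

lemma cnt_mono (m : ℕ) : cnt a b E₀ m ≤ cnt a b E₀ (m+1) := by
  obtain ⟨S, hSpos, hSrank⟩ := exists_posdim _ (jacobi_isHermitian a b m) E₀
  set f : S →ₗ[ℝ] (Fin (m+1) → ℝ) := (ext0 m) ∘ₗ S.subtype with hf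
  have hfinj : Function.Injective f := by
    intro x y h
    exact Subtype.ext (ext0_injective m (by exact h))
  have hT : ∀ u ∈ LinearMap.range f, u ≠ 0 →
      E₀ * (u ⬝ᵥ u) < u ⬝ᵥ (jacobiMatrix a b (m+1) *ᵥ u) := by
    rintro u ⟨⟨v, hv⟩, rfl⟩ hune
    have hvne : v ≠ 0 := by
      intro h
      apply hune
      show ext0 m v = 0
      rw [h, map_zero]
    have h1 : (ext0 m v) ⬝ᵥ (ext0 m v) = v ⬝ᵥ v := ext0_dot m v
    have h2 := ext0_quad a b m v
    have := hSpos v hv hvne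
    show E₀ * ((ext0 m v) ⬝ᵥ (ext0 m v)) < (ext0 m v) ⬝ᵥ (jacobiMatrix a b (m+1) *ᵥ (ext0 m v))
    rw [h1, h2]
    exact this
  have := posdim_le _ (jacobi_isHermitian a b (m+1)) E₀ (LinearMap.range f) hT
  rw [LinearMap.finrank_range_of_inj hfinj] at this
  rw [cnt, cnt, ← hSrank]
  exact this

set_option synthInstance.maxHeartbeats 1000000 in
set_option maxHeartbeats 1000000 in
lemma cnt_le_succ (m : ℕ) : cnt a b E₀ (m+1) ≤ cnt a b E₀ m + 1 := by
  obtain ⟨S, hSpos, hSrank⟩ := exists_posdim _ (jacobi_isHermitian a b (m+1)) E₀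
  set f0 : S →ₗ[ℝ] ℝ := (LinearMap.proj (Fin.last m)) ∘ₗ S.subtype with hf0
  set K := LinearMap.ker f0 with hK
  have hrank : Module.finrank ℝ S ≤ Module.finrank ℝ K + 1 := by
    have := LinearMap.finrank_range_add_finrank_ker f0
    rw [← hK] at this
    have hle : Module.finrank ℝ (LinearMap.range f0) ≤ 1 := by
      have := Submodule.finrank_le (LinearMap.range f0)
      simpa [Module.finrank_self] using this
    omega
  set r : (Fin (m+1) → ℝ) →ₗ[ℝ] (Fin m → ℝ) := LinearMap.funLeft ℝ ℝ Fin.castSucc with hr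
  set φ : K →ₗ[ℝ] (Fin m → ℝ) := r ∘ₗ S.subtype ∘ₗ K.subtype with hφ
  -- for elements of K, extension by zero recovers the original vector
  have hrecover : ∀ x : K, ext0 m (φ x) = ((x : S) : Fin (m+1) → ℝ) := by
    rintro ⟨⟨v, hv⟩, hker⟩
    have hlast : v (Fin.last m) = 0 := by
      have : f0 ⟨v, hv⟩ = 0 := LinearMap.mem_ker.mp hker
      exact this
    funext j
    refine Fin.lastCases ?_ ?_ j
    · rw [ext0_last]
      exact hlast.symm
    · intro i
      rw [ext0_castSucc]
      rfl
  have hφinj : Function.Injective φ := by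
    intro x y h
    have := (hrecover x).symm.trans ((congrArg (ext0 m) h).trans (hrecover y))
    exact Subtype.ext (Subtype.ext this)
  have hT : ∀ u ∈ LinearMap.range φ, u ≠ 0 →
      E₀ * (u ⬝ᵥ u) < u ⬝ᵥ (jacobiMatrix a b m *ᵥ u) := by
    rintro u ⟨x, rfl⟩ hune
    set v : Fin (m+1) → ℝ := ((x : S) : Fin (m+1) → ℝ) with hv
    have hrec : ext0 m (φ x) = v := hrecover x
    have hvne : v ≠ 0 := by
      intro h
      apply hune
      have : ext0 m (φ x) = 0 := by rw [hrec, h]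
      exact ext0_injective m (by rw [this, map_zero])
    have := hSpos v (x : S).2 hvne
    have h1 : (φ x) ⬝ᵥ (φ x) = v ⬝ᵥ v := by rw [← hrec, ext0_dot]
    have h2 : (φ x) ⬝ᵥ (jacobiMatrix a b m *ᵥ (φ x)) = v ⬝ᵥ (jacobiMatrix a b (m+1) *ᵥ v) := by
      rw [← hrec, ext0_quad]
    rw [h1, h2]
    exact this
  have hle := posdim_le _ (jacobi_isHermitian a b m) E₀ (LinearMap.range φ) hT
  rw [LinearMap.finrank_range_of_inj hφinj] at hle
  rw [cnt, cnt, ← hSrank]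
  omega


section Main
variable (a b : ℕ → ℝ) (E₀ : ℝ)

lemma ha' : (∀ k, 1 ≤ k → 0 < a k) → ∀ k, 1 ≤ k → a k ≠ 0 :=
  fun h k hk => ne_of_gt (h k hk)

/-- If `Pₘ(E₀) ≠ 0` then `(-1)^{cₘ} Pₘ(E₀) > 0`. -/
lemma pow_mul_monicP_pos (hpos : ∀ k, 1 ≤ k → 0 < a k) (m : ℕ) (hm : monicP a b m E₀ ≠ 0) :
    0 < (-1:ℝ)^(cnt a b E₀ m) * monicP a b m E₀ := by
  have hprod := monicP_eq_prod a b (ha' a hpos) m E₀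
  set ev := (jacobi_isHermitian a b m).eigenvalues with hev
  have hfac : ∀ i, E₀ - ev i ≠ 0 := by
    intro i h
    exact hm (by rw [hprod]; exact Finset.prod_eq_zero (Finset.mem_univ i) h)
  rw [hprod, ← Finset.prod_filter_mul_prod_filter_not Finset.univ (fun i => E₀ < ev i)]
  have h1 : ∏ i ∈ Finset.univ.filter (fun i => E₀ < ev i), (E₀ - ev i)
      = (-1:ℝ)^(cnt a b E₀ m) * ∏ i ∈ Finset.univ.filter (fun i => E₀ < ev i), (ev i - E₀) := by
    rw [cnt, ← Finset.prod_const, ← Finset.prod_mul_distrib]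
    apply Finset.prod_congr rfl
    intro i _
    ring
  rw [h1]
  have h2 : (0:ℝ) < ∏ i ∈ Finset.univ.filter (fun i => E₀ < ev i), (ev i - E₀) := by
    apply Finset.prod_pos
    intro i hi
    have := (Finset.mem_filter.mp hi).2
    linarith
  have h3 : (0:ℝ) < ∏ i ∈ Finset.univ.filter (fun i => ¬ E₀ < ev i), (E₀ - ev i) := by
    apply Finset.prod_pos
    intro i hi
    have h4 := (Finset.mem_filter.mp hi).2
    have h5 := hfac i
    rcases lt_trichotomy (ev i) E₀ with h | h | h
    · linarith
    · exact absurd (by rw [h]; ring) h5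
    · exact absurd h h4
  have h6 : ((-1:ℝ)^(cnt a b E₀ m))^2 = 1 := by
    rw [← pow_mul, mul_comm, pow_mul]
    norm_num
  have : (-1:ℝ)^(cnt a b E₀ m) * (((-1:ℝ)^(cnt a b E₀ m) *
      ∏ i ∈ Finset.univ.filter (fun i => E₀ < ev i), (ev i - E₀)) *
      ∏ i ∈ Finset.univ.filter (fun i => ¬ E₀ < ev i), (E₀ - ev i))
      = ((-1:ℝ)^(cnt a b E₀ m))^2 *
        ((∏ i ∈ Finset.univ.filter (fun i => E₀ < ev i), (ev i - E₀)) *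
         ∏ i ∈ Finset.univ.filter (fun i => ¬ E₀ < ev i), (E₀ - ev i)) := by ring
  rw [this, h6, one_mul]
  exact mul_pos h2 h3

lemma sgn_eq_pow {x : ℝ} {c : ℕ} (h : 0 < (-1:ℝ)^c * x) : sgn x = (-1)^c := by
  rcases Nat.even_or_odd c with hc | hc
  · rw [hc.neg_one_pow] at h ⊢
    rw [one_mul] at h
    rw [sgn, if_pos h.le]
  · rw [hc.neg_one_pow] at h ⊢
    rw [sgn, if_neg (by nlinarith)]

lemma sgn_monicP (hpos : ∀ k, 1 ≤ k → 0 < a k) (m : ℕ) (hm : monicP a b m E₀ ≠ 0) :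
    sgn (monicP a b m E₀) = (-1:ℝ)^(cnt a b E₀ m) :=
  sgn_eq_pow (pow_mul_monicP_pos a b E₀ hpos m hm)

lemma neg_one_pow_ne_succ (c : ℕ) : ((-1:ℝ))^c ≠ (-1)^(c+1) := by
  rw [pow_succ, mul_neg_one]
  intro h
  have h0 : ((-1:ℝ))^c ≠ 0 := by
    apply pow_ne_zero; norm_num
  apply h0
  linarith

lemma monicP_consec (hpos : ∀ k, 1 ≤ k → 0 < a k) (m : ℕ) :
    ¬(monicP a b m E₀ = 0 ∧ monicP a b (m+1) E₀ = 0) := by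
  induction m with
  | zero =>
    rintro ⟨h0, _⟩
    rw [monicP_zero] at h0
    norm_num at h0
  | succ t ih =>
    rintro ⟨h1, h2⟩
    rw [monicP_succ_succ a b t (ha' a hpos _ (by omega)) (ha' a hpos _ (by omega)), h1] at h2
    have hPt : monicP a b t E₀ = 0 := by
      have ha2 : (a (t+1))^2 ≠ 0 := pow_ne_zero _ (ha' a hpos _ (by omega))
      have : (a (t+1))^2 * monicP a b t E₀ = 0 := by linarith
      exact (mul_eq_zero.mp this).resolve_left ha2
    exact ih ⟨hPt, h1⟩

lemma cnt_zero : cnt a b E₀ 0 = 0 := by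
  rw [cnt]
  simp

lemma Icc_insert (m : ℕ) : Finset.Icc 1 (m+1) = insert (m+1) (Finset.Icc 1 m) := by
  ext x
  simp only [Finset.mem_Icc, Finset.mem_insert]
  omega

/-- number of sign changes among steps 1..m -/
noncomputable def chg (m : ℕ) : ℕ :=
  ((Finset.Icc 1 m).filter
    (fun ℓ => sgn (monicP a b (ℓ - 1) E₀) ≠ sgn (monicP a b ℓ E₀))).card

lemma chg_succ (m : ℕ) :
    chg a b E₀ (m+1) =
      chg a b E₀ m +
        (if sgn (monicP a b m E₀) ≠ sgn (monicP a b (m+1) E₀) then 1 else 0) := by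
  rw [chg, chg, Icc_insert, Finset.filter_insert]
  have hnot : (m+1) ∉ Finset.Icc 1 m := by simp
  simp only [Nat.add_sub_cancel]
  split_ifs with h
  · rw [Finset.card_insert_of_notMem (fun hc => hnot (Finset.mem_of_mem_filter _ hc))]
  · rw [add_zero]

/-- Main induction: if `Pₘ(E₀) ≠ 0` the number of sign changes equals `cₘ`. -/
lemma chg_eq_cnt (hpos : ∀ k, 1 ≤ k → 0 < a k) :
    ∀ m, monicP a b m E₀ ≠ 0 → chg a b E₀ m = cnt a b E₀ m := by
  intro m
  induction m using Nat.strong_induction_on with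
  | _ m ih =>
    match m with
    | 0 =>
      intro _
      rw [cnt_zero, chg]
      simp
    | (m+1) =>
      intro hP1
      by_cases hPm : monicP a b m E₀ = 0
      · -- the skipped-zero case; here m = t+1 with P t ≠ 0
        match m, hPm, hP1, ih with
        | 0, hPm, _, _ =>
          rw [monicP_zero] at hPm; norm_num at hPm
        | (t+1), hPm, hP1, ih =>
          have hPt : monicP a b t E₀ ≠ 0 := by
            intro h
            exact monicP_consec a b E₀ hpos t ⟨h, hPm⟩
          have hiht := ih t (by omega) hPt
          -- P_{t+2} = -(a_{t+1})² P_t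
          have hrec : monicP a b (t+2) E₀ = -((a (t+1))^2) * monicP a b t E₀ := by
            rw [monicP_succ_succ a b t (ha' a hpos _ (by omega)) (ha' a hpos _ (by omega)), hPm]
            ring
          -- sign of P_{t+2} is opposite to sign of P_t
          have hsgn_t : sgn (monicP a b t E₀) = (-1:ℝ)^(cnt a b E₀ t) :=
            sgn_monicP a b E₀ hpos t hPt
          have hpos_t := pow_mul_monicP_pos a b E₀ hpos t hPt
          have hpos_t2 : 0 < (-1:ℝ)^(cnt a b E₀ t + 1) * monicP a b (t+2) E₀ := by
            rw [hrec, pow_succ]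
            have ha2 : 0 < (a (t+1))^2 := by
              have := hpos (t+1) (by omega); positivity
            calc (0:ℝ) < (a (t+1))^2 * ((-1:ℝ)^(cnt a b E₀ t) * monicP a b t E₀) := by
                  exact mul_pos ha2 hpos_t
              _ = (-1:ℝ)^(cnt a b E₀ t) * -1 * (-((a (t+1))^2) * monicP a b t E₀) := by ring
          have hsgn_t2 : sgn (monicP a b (t+2) E₀) = (-1:ℝ)^(cnt a b E₀ t + 1) :=
            sgn_eq_pow hpos_t2
          have hsgn_t2' : sgn (monicP a b (t+2) E₀) = (-1:ℝ)^(cnt a b E₀ (t+2)) :=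
            sgn_monicP a b E₀ hpos (t+2) hP1
          -- counting: c_{t+2} = c_t + 1
          have hb1 := cnt_mono a b E₀ t
          have hb2 : cnt a b E₀ (t+1) ≤ cnt a b E₀ (t+2) := cnt_mono a b E₀ (t+1)
          have hb3 := cnt_le_succ a b E₀ t
          have hb4 : cnt a b E₀ (t+2) ≤ cnt a b E₀ (t+1) + 1 := cnt_le_succ a b E₀ (t+1)
          have hcnt : cnt a b E₀ (t+2) = cnt a b E₀ t + 1 := by
            have heq : (-1:ℝ)^(cnt a b E₀ (t+2)) = (-1:ℝ)^(cnt a b E₀ t + 1) := by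
              rw [← hsgn_t2', hsgn_t2]
            rcases (by omega : cnt a b E₀ (t+2) = cnt a b E₀ t ∨
                cnt a b E₀ (t+2) = cnt a b E₀ t + 1 ∨
                cnt a b E₀ (t+2) = cnt a b E₀ t + 2) with hc | hc | hc
            · rw [hc] at heq
              exact absurd heq (neg_one_pow_ne_succ _)
            · exact hc
            · rw [hc] at heq
              have h2 : (-1:ℝ)^(cnt a b E₀ t + 2) = (-1:ℝ)^(cnt a b E₀ t) := by
                rw [pow_add]; norm_num
              rw [h2] at heq
              exact absurd heq (neg_one_pow_ne_succ _)
          have hsgn_mid : sgn (monicP a b (t+1) E₀) = 1 := by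
            rw [hPm, sgn, if_pos le_rfl]
          have hchg2 : chg a b E₀ (t+2) = chg a b E₀ t + 1 := by
            rw [chg_succ, chg_succ]
            rcases Nat.even_or_odd (cnt a b E₀ t) with hc | hc
            · have h1 : (-1:ℝ)^(cnt a b E₀ t) = 1 := hc.neg_one_pow
              have hsa : sgn (monicP a b t E₀) = 1 := by rw [hsgn_t, h1]
              have hsb : sgn (monicP a b (t+2) E₀) = -1 := by
                rw [hsgn_t2, pow_succ, h1]; ring
              rw [if_neg (by rw [hsa, hsgn_mid]; simp),
                if_pos (by rw [hsgn_mid, hsb]; norm_num)]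
            · have h1 : (-1:ℝ)^(cnt a b E₀ t) = -1 := hc.neg_one_pow
              have hsa : sgn (monicP a b t E₀) = -1 := by rw [hsgn_t, h1]
              have hsb : sgn (monicP a b (t+2) E₀) = 1 := by
                rw [hsgn_t2, pow_succ, h1]; ring
              rw [if_pos (by rw [hsa, hsgn_mid]; norm_num),
                if_neg (by rw [hsgn_mid, hsb]; simp)]
          rw [hchg2, hiht, hcnt]
      · have hihm := ih m (by omega) hPm
        have hsgn_m : sgn (monicP a b m E₀) = (-1:ℝ)^(cnt a b E₀ m) :=
          sgn_monicP a b E₀ hpos m hPm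
        have hsgn_m1 : sgn (monicP a b (m+1) E₀) = (-1:ℝ)^(cnt a b E₀ (m+1)) :=
          sgn_monicP a b E₀ hpos (m+1) hP1
        have hb1 := cnt_mono a b E₀ m
        have hb2 := cnt_le_succ a b E₀ m
        rw [chg_succ]
        rcases (by omega : cnt a b E₀ (m+1) = cnt a b E₀ m ∨
            cnt a b E₀ (m+1) = cnt a b E₀ m + 1) with hc | hc
        · rw [if_neg, add_zero, hihm, hc]
          rw [hsgn_m, hsgn_m1, hc]
          simp
        · rw [if_pos, hihm, hc]
          rw [hsgn_m, hsgn_m1, hc]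
          exact neg_one_pow_ne_succ _

end Main
end Sturm

open Sturm in
theorem sturm_oscillation_jacobi_sgn_zero_one (a b : ℕ → ℝ) (ha : ∀ n, 1 ≤ n → 0 < a n)
    (n : ℕ) (hn : 1 ≤ n) (E₀ : ℝ) (hP : monicP a b n E₀ ≠ 0) :
    {E : ℝ | IsEigenvalue (jacobiMatrix a b n) E ∧ E₀ < E}.ncard =
      ((Finset.Icc 1 n).filter
        (fun ℓ => sgn (monicP a b (ℓ - 1) E₀) ≠ sgn (monicP a b ℓ E₀))).card ∧
    {E : ℝ | IsEigenvalue (jacobiMatrix a b n) E ∧ E < E₀}.ncard =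
      ((Finset.Icc 1 n).filter
        (fun ℓ => sgn (monicP a b (ℓ - 1) E₀) = sgn (monicP a b ℓ E₀))).card := by
  classical
  have ha' : ∀ k, 1 ≤ k → a k ≠ 0 := fun k hk => ne_of_gt (ha k hk)
  set ev := (jacobi_isHermitian a b n).eigenvalues with hev
  have hinj := ev_injective a b ha n
  -- no eigenvalue equals E₀
  have hne : ∀ i, ev i ≠ E₀ := by
    intro i h
    apply hP
    rw [monicP_eq_prod a b ha' n E₀]
    exact Finset.prod_eq_zero (Finset.mem_univ i) (by rw [← hev, h, sub_self])
  -- eigenvalue criterion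
  have hEig : ∀ E : ℝ, IsEigenvalue (jacobiMatrix a b n) E ↔ ∃ i, ev i = E := by
    intro E
    rw [isEigenvalue_iff_monicP a b ha' n E, monicP_eq_prod a b ha' n E,
      Finset.prod_eq_zero_iff]
    constructor
    · rintro ⟨i, _, hi⟩
      exact ⟨i, by linarith [sub_eq_zero.mp hi]⟩
    · rintro ⟨i, rfl⟩
      exact ⟨i, Finset.mem_univ i, sub_self _⟩
  -- the two sets as finsets
  have hsetA : {E : ℝ | IsEigenvalue (jacobiMatrix a b n) E ∧ E₀ < E}
      = ↑((Finset.univ.filter (fun i => E₀ < ev i)).image ev) := by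
    ext E
    simp only [Set.mem_setOf_eq, Finset.coe_image, Set.mem_image, Finset.mem_coe,
      Finset.mem_filter, Finset.mem_univ, true_and, hEig]
    constructor
    · rintro ⟨⟨i, rfl⟩, hlt⟩
      exact ⟨i, hlt, rfl⟩
    · rintro ⟨i, hi, rfl⟩
      exact ⟨⟨i, rfl⟩, hi⟩
  have hsetB : {E : ℝ | IsEigenvalue (jacobiMatrix a b n) E ∧ E < E₀}
      = ↑((Finset.univ.filter (fun i => ev i < E₀)).image ev) := by
    ext E
    simp only [Set.mem_setOf_eq, Finset.coe_image, Set.mem_image, Finset.mem_coe,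
      Finset.mem_filter, Finset.mem_univ, true_and, hEig]
    constructor
    · rintro ⟨⟨i, rfl⟩, hlt⟩
      exact ⟨i, hlt, rfl⟩
    · rintro ⟨i, hi, rfl⟩
      exact ⟨⟨i, rfl⟩, hi⟩
  have hchg := chg_eq_cnt a b E₀ ha n hP
  have hcardA : {E : ℝ | IsEigenvalue (jacobiMatrix a b n) E ∧ E₀ < E}.ncard
      = cnt a b E₀ n := by
    rw [hsetA, Set.ncard_coe_finset, Finset.card_image_of_injective _ hinj, cnt]
  have hA : {E : ℝ | IsEigenvalue (jacobiMatrix a b n) E ∧ E₀ < E}.ncard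
      = ((Finset.Icc 1 n).filter
          (fun ℓ => sgn (monicP a b (ℓ - 1) E₀) ≠ sgn (monicP a b ℓ E₀))).card := by
    rw [hcardA, ← hchg]; rfl
  refine ⟨hA, ?_⟩
  -- counting below
  have hsplit_ev : (Finset.univ.filter (fun i => E₀ < ev i)).card
      + (Finset.univ.filter (fun i => ¬ E₀ < ev i)).card = n := by
    rw [Finset.card_filter_add_card_filter_not]
    simp
  have hbelow_eq : (Finset.univ.filter (fun i => ev i < E₀))
      = (Finset.univ.filter (fun i => ¬ E₀ < ev i)) := by
    apply Finset.filter_congr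
    intro i _
    constructor
    · intro h; exact not_lt.mpr h.le
    · intro h
      rcases lt_trichotomy (ev i) E₀ with h' | h' | h'
      · exact h'
      · exact absurd h' (hne i)
      · exact absurd h' h
  have hsplit_sgn : ((Finset.Icc 1 n).filter
        (fun ℓ => sgn (monicP a b (ℓ - 1) E₀) ≠ sgn (monicP a b ℓ E₀))).card
      + ((Finset.Icc 1 n).filter
        (fun ℓ => ¬ sgn (monicP a b (ℓ - 1) E₀) ≠ sgn (monicP a b ℓ E₀))).card = n := by
    rw [Finset.card_filter_add_card_filter_not]
    simp [Nat.card_Icc]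
  have hagree_eq : ((Finset.Icc 1 n).filter
        (fun ℓ => sgn (monicP a b (ℓ - 1) E₀) = sgn (monicP a b ℓ E₀)))
      = ((Finset.Icc 1 n).filter
        (fun ℓ => ¬ sgn (monicP a b (ℓ - 1) E₀) ≠ sgn (monicP a b ℓ E₀))) := by
    apply Finset.filter_congr
    intro ℓ _
    rw [not_not]
  have hcardB : {E : ℝ | IsEigenvalue (jacobiMatrix a b n) E ∧ E < E₀}.ncard
      = (Finset.univ.filter (fun i => ev i < E₀)).card := by
    rw [hsetB, Set.ncard_coe_finset, Finset.card_image_of_injective _ hinj]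
  rw [hcardB, hbelow_eq, hagree_eq]
  have h1 : ((Finset.Icc 1 n).filter
      (fun ℓ => sgn (monicP a b (ℓ - 1) E₀) ≠ sgn (monicP a b ℓ E₀))).card
      = cnt a b E₀ n := hchg ▸ (by rfl)
  have h2 : (Finset.univ.filter (fun i => E₀ < ev i)).card = cnt a b E₀ n := rfl
  omega
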